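/- Let n > 4 and L > 0, and let x₁, …, xₙ ∈ ℝ^d with ‖xᵢ‖₂ ≤ L for all i. Let x₁′, …, xₙ′ be obtained from x₁, …, xₙ by replacing exactly one entry x_k by a vector x_k′ with ‖x_k′‖₂ ≤ L. Then the sample covariance matrices satisfy ‖Ĉov(x₁,…,xₙ) − Ĉov(x₁′,…,xₙ′)‖_F ≤ 7L²/(n−1). -/

import Mathlib

open scoped BigOperators

/-- The sample mean of `n` vectors in `ℝ^d`. -/
noncomputable def sampleMean {n d : ℕ} (X : Fin n → Fin d → ℝ) : Fin d → ℝ :=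
  fun a => (∑ i, X i a) / n

/-- The (unbiased) sample covariance matrix of `n` vectors in `ℝ^d`:
`Ĉov(x₁,…,xₙ) = (1/(n−1))·Σᵢ (xᵢ − μ)(xᵢ − μ)ᵀ`. -/
noncomputable def sampleCov {n d : ℕ} (X : Fin n → Fin d → ℝ) :
    Matrix (Fin d) (Fin d) ℝ :=
  Matrix.of fun a b =>
    (∑ i, (X i a - sampleMean X a) * (X i b - sampleMean X b)) / ((n : ℝ) - 1)

noncomputable def toE {d : ℕ} (f : Fin d → ℝ) : EuclideanSpace ℝ (Fin d) :=
  (WithLp.equiv 2 _).symm f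

noncomputable def toE2 {d : ℕ} (M : Fin d → Fin d → ℝ) : EuclideanSpace ℝ (Fin d × Fin d) :=
  (WithLp.equiv 2 _).symm (fun p => M p.1 p.2)

lemma norm_toE {d : ℕ} (f : Fin d → ℝ) : ‖toE f‖ = Real.sqrt (∑ a, f a ^ 2) := by
  rw [EuclideanSpace.norm_eq]
  congr 1
  refine Finset.sum_congr rfl fun a _ => ?_
  rw [toE, WithLp.equiv_symm_apply, PiLp.toLp_apply, Real.norm_eq_abs, sq_abs]

lemma norm_toE2 {d : ℕ} (M : Fin d → Fin d → ℝ) :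
    ‖toE2 M‖ = Real.sqrt (∑ a, ∑ b, M a b ^ 2) := by
  rw [EuclideanSpace.norm_eq]
  congr 1
  rw [Fintype.sum_prod_type]
  refine Finset.sum_congr rfl fun p _ => Finset.sum_congr rfl fun q _ => ?_
  simp [toE2, WithLp.equiv_symm_apply, PiLp.toLp_apply, Real.norm_eq_abs, sq_abs]

lemma norm_rank1 {d : ℕ} (u v : Fin d → ℝ) :
    ‖toE2 (fun a b => u a * v b)‖ = ‖toE u‖ * ‖toE v‖ := by
  rw [norm_toE2, norm_toE, norm_toE, ← Real.sqrt_mul (by positivity)]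
  congr 1
  rw [Finset.sum_mul_sum]
  refine Finset.sum_congr rfl fun a _ => Finset.sum_congr rfl fun b _ => ?_
  ring

lemma sum_update' {n : ℕ} (k : Fin n) (f : Fin n → ℝ) (c : ℝ) :
    ∑ i, Function.update f k c i = ∑ i, f i + (c - f k) := by
  have h : ∀ i, Function.update f k c i = f i + (if i = k then c - f k else 0) := by
    intro i; rcases eq_or_ne i k with h | h <;> simp [h, Function.update_apply]
  simp [h, Finset.sum_add_distrib, Finset.sum_ite_eq']

lemma cov_eq {n d : ℕ} (hn : (n : ℝ) ≠ 0) (X : Fin n → Fin d → ℝ) (a b : Fin d) :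
    sampleCov X a b =
      (∑ i, X i a * X i b - n * sampleMean X a * sampleMean X b) / ((n : ℝ) - 1) := by
  have key : ∑ i, (X i a - sampleMean X a) * (X i b - sampleMean X b)
      = ∑ i, X i a * X i b - n * sampleMean X a * sampleMean X b := by
    have h : ∀ i, (X i a - sampleMean X a) * (X i b - sampleMean X b)
        = X i a * X i b - sampleMean X a * X i b - sampleMean X b * X i a
          + sampleMean X a * sampleMean X b := by intro i; ring
    rw [Finset.sum_congr rfl fun i _ => h i]
    simp only [Finset.sum_add_distrib, Finset.sum_sub_distrib, ← Finset.mul_sum,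
      Finset.sum_const, Finset.card_univ, Fintype.card_fin, nsmul_eq_mul]
    have hSa : ∑ i, X i a = n * sampleMean X a := by
      simp [sampleMean]; field_simp
    have hSb : ∑ i, X i b = n * sampleMean X b := by
      simp [sampleMean]; field_simp
    rw [hSa, hSb]; ring
  simp only [sampleCov, Matrix.of_apply, key]

set_option maxHeartbeats 1000000 in
/-- **Sensitivity of the sample covariance operator.** If `n > 4`, all data vectors have
`ℓ₂`-norm at most `L`, and one data vector is replaced by another of norm at most `L`, then
the Frobenius norm of the change in the sample covariance matrix is at most `7L²/(n−1)`. -/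
theorem sampleCov_sensitivity
    {d : ℕ} (n : ℕ) (hn : 4 < n) (L : ℝ) (hL : 0 < L)
    (X : Fin n → Fin d → ℝ) (k : Fin n) (x' : Fin d → ℝ)
    (hX : ∀ i, Real.sqrt (∑ a, (X i a) ^ 2) ≤ L)
    (hx' : Real.sqrt (∑ a, (x' a) ^ 2) ≤ L) :
    Real.sqrt (∑ a, ∑ b,
        (sampleCov X a b - sampleCov (Function.update X k x') a b) ^ 2)
      ≤ 7 * L ^ 2 / ((n : ℝ) - 1) := by
  have hn5 : (5 : ℝ) ≤ (n : ℝ) := by exact_mod_cast hn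
  have hnpos : (0 : ℝ) < n := by linarith
  have hnne : (n : ℝ) ≠ 0 := ne_of_gt hnpos
  have hn1 : (0 : ℝ) < (n : ℝ) - 1 := by linarith
  set X' := Function.update X k x' with hX'
  set m := sampleMean X with hm
  set δ : Fin d → ℝ := fun a => x' a - X k a with hδ
  -- mean of X'
  have hmean' : ∀ a, sampleMean X' a = m a + δ a / n := by
    intro a
    have : ∑ i, X' i a = ∑ i, X i a + (x' a - X k a) := by
      have : ∀ i, X' i a = Function.update (fun j => X j a) k (x' a) i := by
        intro i; rcases eq_or_ne i k with h | h <;> simp [hX', h, Function.update_apply]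
      rw [Finset.sum_congr rfl fun i _ => this i, sum_update']
    simp only [sampleMean, this, hm, hδ]
    field_simp
  -- sum of products for X'
  have hprod : ∀ a b, ∑ i, X' i a * X' i b = ∑ i, X i a * X i b + (x' a * x' b - X k a * X k b) := by
    intro a b
    have h1 : ∀ i, X' i a * X' i b
        = Function.update (fun j => X j a * X j b) k (x' a * x' b) i := by
      intro i; rcases eq_or_ne i k with h | h <;> simp [hX', h, Function.update_apply]
    rw [Finset.sum_congr rfl fun i _ => h1 i, sum_update']
  -- pointwise difference formula
  have key : ∀ a b, sampleCov X a b - sampleCov X' a b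
      = (X k a * X k b - x' a * x' b + m a * δ b + δ a * m b + δ a * (δ b / n)) / ((n : ℝ) - 1) := by
    intro a b
    rw [cov_eq hnne X a b, cov_eq hnne X' a b, hprod a b, hmean' a, hmean' b]
    rw [div_sub_div_same]
    congr 1
    field_simp
    ring
  -- vector form
  set u := X k with hu
  set D : Fin d → Fin d → ℝ := fun a b => sampleCov X a b - sampleCov X' a b with hD
  have hvec : toE2 D = (((n : ℝ) - 1)⁻¹) •
      (toE2 (fun a b => u a * u b) - toE2 (fun a b => x' a * x' b)
        + toE2 (fun a b => m a * δ b) + toE2 (fun a b => δ a * m b)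
        + ((n : ℝ)⁻¹) • toE2 (fun a b => δ a * δ b)) := by
    refine PiLp.ext fun p => ?_
    simp only [toE2, WithLp.equiv_symm_apply, PiLp.toLp_apply, PiLp.smul_apply, PiLp.add_apply,
      PiLp.sub_apply, smul_eq_mul, hD]
    rw [key p.1 p.2]
    field_simp
  -- norm bounds of ingredients
  have hNu : ‖toE u‖ ≤ L := by rw [norm_toE]; exact hX k
  have hNx' : ‖toE x'‖ ≤ L := by rw [norm_toE]; exact hx'
  have hNδ : ‖toE δ‖ ≤ 2 * L := by
    have hsub : toE δ = toE x' - toE u := by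
      refine PiLp.ext fun a => ?_
      simp [toE, WithLp.equiv_symm_apply, PiLp.toLp_apply, PiLp.sub_apply, hδ, hu]
    rw [hsub]
    calc ‖toE x' - toE u‖ ≤ ‖toE x'‖ + ‖toE u‖ := norm_sub_le _ _
      _ ≤ 2 * L := by linarith
  have hNm : ‖toE m‖ ≤ L := by
    have hmm : toE m = ((n : ℝ)⁻¹) • ∑ i, toE (X i) := by
      refine PiLp.ext fun a => ?_
      simp only [toE, WithLp.equiv_symm_apply, PiLp.toLp_apply, PiLp.smul_apply, smul_eq_mul, hm, sampleMean]
      rw [WithLp.ofLp_sum, Finset.sum_apply]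
      simp [WithLp.equiv_symm_apply, PiLp.toLp_apply, div_eq_inv_mul]
    rw [hmm, norm_smul]
    have h1 : ‖∑ i, toE (X i)‖ ≤ ∑ i : Fin n, L := by
      refine (norm_sum_le _ _).trans (Finset.sum_le_sum fun i _ => ?_)
      rw [norm_toE]; exact hX i
    simp only [Finset.sum_const, Finset.card_univ, Fintype.card_fin, nsmul_eq_mul] at h1
    rw [Real.norm_eq_abs, abs_of_pos (by positivity : (0:ℝ) < (n:ℝ)⁻¹)]
    calc (n : ℝ)⁻¹ * ‖∑ i, toE (X i)‖ ≤ (n : ℝ)⁻¹ * (n * L) := by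
          apply mul_le_mul_of_nonneg_left h1 (by positivity)
      _ = L := by field_simp
  have hL0 : (0 : ℝ) ≤ L := le_of_lt hL
  -- combine
  set A := toE2 (fun a b => u a * u b) with hA
  set B := toE2 (fun a b => x' a * x' b) with hB
  set C := toE2 (fun a b => m a * δ b) with hC
  set E := toE2 (fun a b => δ a * m b) with hE
  set F := toE2 (fun a b => δ a * δ b) with hF
  have hgoal : Real.sqrt (∑ a, ∑ b, (sampleCov X a b - sampleCov X' a b) ^ 2) = ‖toE2 D‖ := by
    rw [norm_toE2]
  rw [hgoal, hvec, norm_smul]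
  rw [Real.norm_eq_abs, abs_of_pos (by positivity : (0:ℝ) < ((n:ℝ) - 1)⁻¹)]
  have hsum : ‖A - B + C + E + ((n : ℝ)⁻¹) • F‖ ≤ 7 * L ^ 2 := by
    have t1 : ‖A‖ ≤ L ^ 2 := by
      rw [hA, norm_rank1, sq]
      exact mul_le_mul hNu hNu (norm_nonneg _) hL0
    have t2 : ‖B‖ ≤ L ^ 2 := by
      rw [hB, norm_rank1, sq]
      exact mul_le_mul hNx' hNx' (norm_nonneg _) hL0
    have t3 : ‖C‖ ≤ 2 * L ^ 2 := by
      rw [hC, norm_rank1]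
      calc ‖toE m‖ * ‖toE δ‖ ≤ L * (2 * L) :=
            mul_le_mul hNm hNδ (norm_nonneg _) hL0
        _ = 2 * L ^ 2 := by ring
    have t4 : ‖E‖ ≤ 2 * L ^ 2 := by
      rw [hE, norm_rank1]
      calc ‖toE δ‖ * ‖toE m‖ ≤ (2 * L) * L :=
            mul_le_mul hNδ hNm (norm_nonneg _) (by linarith)
        _ = 2 * L ^ 2 := by ring
    have t5 : ‖((n : ℝ)⁻¹) • F‖ ≤ L ^ 2 := by
      rw [norm_smul, Real.norm_eq_abs, abs_of_pos (by positivity : (0:ℝ) < (n:ℝ)⁻¹), hF, norm_rank1]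
      have h5 : ‖toE δ‖ * ‖toE δ‖ ≤ 4 * L ^ 2 := by
        calc ‖toE δ‖ * ‖toE δ‖ ≤ (2 * L) * (2 * L) :=
              mul_le_mul hNδ hNδ (norm_nonneg _) (by linarith)
          _ = 4 * L ^ 2 := by ring
      have hinv : (n : ℝ)⁻¹ ≤ 5⁻¹ := by
        apply inv_anti₀ <;> linarith
      calc (n : ℝ)⁻¹ * (‖toE δ‖ * ‖toE δ‖) ≤ 5⁻¹ * (4 * L ^ 2) := by
            apply mul_le_mul hinv h5 (by positivity) (by norm_num)
        _ ≤ L ^ 2 := by nlinarith [sq_nonneg L]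
    have s1 : ‖A - B‖ ≤ ‖A‖ + ‖B‖ := norm_sub_le _ _
    have s2 : ‖A - B + C‖ ≤ ‖A - B‖ + ‖C‖ := norm_add_le _ _
    have s3 : ‖A - B + C + E‖ ≤ ‖A - B + C‖ + ‖E‖ := norm_add_le _ _
    have s4 : ‖A - B + C + E + ((n : ℝ)⁻¹) • F‖ ≤ ‖A - B + C + E‖ + ‖((n : ℝ)⁻¹) • F‖ :=
      norm_add_le _ _
    linarith
  calc ((n : ℝ) - 1)⁻¹ * ‖_‖ ≤ ((n : ℝ) - 1)⁻¹ * (7 * L ^ 2) := by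
        apply mul_le_mul_of_nonneg_left hsum (by positivity)
    _ = 7 * L ^ 2 / ((n : ℝ) - 1) := by rw [div_eq_mul_inv]; ring
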